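/- Consider the random directed multigraph model on N nodes with offspring PGF μ. For every M and k with 1 ≤ k ≤ M ≤ N, the probability of the event that the out-component of node 0 has exactly k nodes and is contained in {0,1,...,M-1} equals q_k · C(M-1,k-1) / C(N-1,k-1), where C(n,r) denotes the binomial coefficient. -/

import Mathlib

open scoped Classical

/-- The weight (probability) of a realization `g` of the random directed multigraph on
`N` nodes: independently for each node `u`, its out-degree `ℓ` is drawn from the pmf `p`,
and then `ℓ` out-neighbors are drawn independently uniformly from the `N - 1` nodes
other than `u` (with replacement). -/
noncomputable def graphWeight (N : ℕ) (p : ℕ → ℝ) (g : Fin N → List (Fin N)) : ℝ :=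
  ∏ u : Fin N,
    if ∀ v ∈ g u, v ≠ u then
      p (g u).length * (1 / ((N : ℝ) - 1)) ^ (g u).length
    else 0

/-- Probability of an event in the random directed multigraph model. -/
noncomputable def graphProb (N : ℕ) (p : ℕ → ℝ) (E : Set (Fin N → List (Fin N))) : ℝ :=
  ∑' g : Fin N → List (Fin N), Set.indicator E (graphWeight N p) g

/-- The out-component of node `0`: the set of nodes reachable from node `0`
(including node `0` itself) following directed edges. -/
def outComp (N : ℕ) (hN : 0 < N) (g : Fin N → List (Fin N)) : Set (Fin N) :=
  {v | Relation.ReflTransGen (fun a b => b ∈ g a) ⟨0, hN⟩ v}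

/-- `qProb N hN p k` is the probability that the out-component of node `0` has exactly
`k` nodes. -/
noncomputable def qProb (N : ℕ) (hN : 0 < N) (p : ℕ → ℝ) (k : ℕ) : ℝ :=
  graphProb N p {g | (outComp N hN g).ncard = k}

/-! ### Auxiliary definitions -/

noncomputable def gW (N : ℕ) (p : ℕ → ℝ) (g : Fin N → List (Fin N)) : ENNReal :=
  ENNReal.ofReal (graphWeight N p g)

noncomputable def cS (N : ℕ) (hN : 0 < N) (p : ℕ → ℝ) (S : Finset (Fin N)) : ENNReal :=
  ∑' g : Fin N → List (Fin N),
    Set.indicator {g | outComp N hN g = ↑S} (gW N p) g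

lemma graphWeight_nonneg {N : ℕ} (hN : 2 ≤ N) {p : ℕ → ℝ} (hp0 : ∀ ℓ, 0 ≤ p ℓ)
    (g : Fin N → List (Fin N)) : 0 ≤ graphWeight N p g := by
  apply Finset.prod_nonneg
  intro u _
  split
  · apply mul_nonneg (hp0 _)
    apply pow_nonneg
    have : (1:ℝ) ≤ (N:ℝ) - 1 := by
      have : (2:ℝ) ≤ (N:ℝ) := by exact_mod_cast hN
      linarith
    positivity
  · exact le_refl 0

lemma tsum_eq_toReal_ofReal {α : Type*} (f : α → ℝ) (hf : ∀ a, 0 ≤ f a) :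
    ∑' a, f a = (∑' a, ENNReal.ofReal (f a)).toReal := by
  by_cases h : Summable f
  · rw [← ENNReal.ofReal_tsum_of_nonneg hf h, ENNReal.toReal_ofReal (tsum_nonneg hf)]
  · rw [tsum_eq_zero_of_not_summable h]
    have htop : ∑' a, ENNReal.ofReal (f a) = ⊤ := by
      by_contra h'
      apply h
      have hs := ENNReal.summable_toReal h'
      exact (summable_congr (fun a => by rw [ENNReal.toReal_ofReal (hf a)])).mp hs
    simp [htop]

lemma graphProb_eq_toReal {N : ℕ} (hN : 2 ≤ N) {p : ℕ → ℝ} (hp0 : ∀ ℓ, 0 ≤ p ℓ)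
    (E : Set (Fin N → List (Fin N))) :
    graphProb N p E = (∑' g : Fin N → List (Fin N), Set.indicator E (gW N p) g).toReal := by
  unfold graphProb
  rw [tsum_eq_toReal_ofReal _ (fun g => Set.indicator_nonneg
    (fun g _ => graphWeight_nonneg hN hp0 g) g)]
  congr 1
  apply tsum_congr
  intro g
  by_cases h : g ∈ E <;> simp [Set.indicator, h, gW]

/-- Decomposition of an event defined through a predicate on the out-component
into the events on which the out-component is a fixed finset. -/
lemma tsum_indicator_decomp {N : ℕ} (hN : 0 < N) (p : ℕ → ℝ)
    (Q : Finset (Fin N) → Prop) (𝒮 : Finset (Finset (Fin N)))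
    (h𝒮 : ∀ S, S ∈ 𝒮 ↔ Q S) :
    (∑' g : Fin N → List (Fin N),
        Set.indicator {g | Q (outComp N hN g).toFinset} (gW N p) g)
      = ∑ S ∈ 𝒮, cS N hN p S := by
  unfold cS
  rw [← Summable.tsum_finsetSum (fun S _ => ENNReal.summable)]
  apply tsum_congr
  intro g
  have hiff : ∀ S : Finset (Fin N),
      (outComp N hN g = ↑S) ↔ (S = (outComp N hN g).toFinset) := by
    intro S
    constructor
    · intro h; rw [h]; simp
    · intro h; rw [h]; simp
  simp only [Set.indicator_apply, Set.mem_setOf_eq]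
  calc (if Q (outComp N hN g).toFinset then gW N p g else 0)
      = if (outComp N hN g).toFinset ∈ 𝒮 then gW N p g else 0 :=
        if_congr (h𝒮 _).symm rfl rfl
    _ = ∑ S ∈ 𝒮,
          if S = (outComp N hN g).toFinset then gW N p g else 0 :=
        (Finset.sum_ite_eq' 𝒮 ((outComp N hN g).toFinset)
          (fun _ => gW N p g)).symm
    _ = ∑ S ∈ 𝒮,
          if outComp N hN g = ↑S then gW N p g else 0 :=
        Finset.sum_congr rfl fun S _ => if_congr (hiff S).symm rfl rfl

/-- `cS` vanishes when `0 ∉ S`. -/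
lemma cS_eq_zero {N : ℕ} (hN : 0 < N) (p : ℕ → ℝ) (S : Finset (Fin N))
    (h : (⟨0, hN⟩ : Fin N) ∉ S) : cS N hN p S = 0 := by
  unfold cS
  convert tsum_zero with g
  rw [Set.indicator_apply, if_neg]
  intro hg
  simp only [Set.mem_setOf_eq] at hg
  apply h
  have : (⟨0, hN⟩ : Fin N) ∈ outComp N hN g := Relation.ReflTransGen.refl
  rw [hg] at this
  exact_mod_cast this

/-- Invariance of `cS` under a permutation fixing `0`. -/
lemma cS_perm {N : ℕ} (hN : 0 < N) (p : ℕ → ℝ) (σ : Equiv.Perm (Fin N))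
    (hσ : σ ⟨0, hN⟩ = ⟨0, hN⟩) (S : Finset (Fin N)) :
    cS N hN p (S.image σ) = cS N hN p S := by
  -- the relabeling equiv on realizations
  set T : (Fin N → List (Fin N)) ≃ (Fin N → List (Fin N)) :=
    { toFun := fun g u => (g (σ.symm u)).map σ
      invFun := fun g u => (g (σ u)).map σ.symm
      left_inv := by intro g; funext u; simp [List.map_map]
      right_inv := by intro g; funext u; simp [List.map_map] } with hT
  have hweight : ∀ g, graphWeight N p (T g) = graphWeight N p g := by
    intro g
    unfold graphWeight
    rw [← Equiv.prod_comp σ.symm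
      (fun u => if ∀ v ∈ g u, v ≠ u then
        p (g u).length * (1 / ((N : ℝ) - 1)) ^ (g u).length else 0)]
    apply Finset.prod_congr rfl
    intro u _
    have hcond : (∀ v ∈ (g (σ.symm u)).map σ, v ≠ u) ↔ (∀ v ∈ g (σ.symm u), v ≠ σ.symm u) := by
      simp only [List.mem_map]
      constructor
      · intro h v hv hvv
        exact h (σ v) ⟨v, hv, rfl⟩ (by rw [hvv]; simp)
      · rintro h v ⟨w, hw, rfl⟩ hww
        exact h w hw (by rw [← hww]; simp)
    simp only [hT, Equiv.coe_fn_mk, List.length_map]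
    by_cases h : ∀ v ∈ g (σ.symm u), v ≠ σ.symm u
    · rw [if_pos (hcond.mpr h), if_pos h]
    · rw [if_neg (fun hh => h (hcond.mp hh)), if_neg h]
  have houtComp : ∀ g, outComp N hN (T g) = σ '' (outComp N hN g) := by
    intro g
    have hmem : ∀ a b : Fin N, b ∈ T g a ↔ σ.symm b ∈ g (σ.symm a) := by
      intro a b
      simp only [hT, Equiv.coe_fn_mk, List.mem_map]
      constructor
      · rintro ⟨w, hw, rfl⟩; simpa using hw
      · intro h; exact ⟨σ.symm b, h, by simp⟩
    ext v
    simp only [outComp, Set.mem_setOf_eq, Set.mem_image]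
    constructor
    · intro h
      refine ⟨σ.symm v, ?_, by simp⟩
      have : Relation.ReflTransGen (fun a b => b ∈ g a) (σ.symm ⟨0, hN⟩) (σ.symm v) := Relation.ReflTransGen.lift (p := fun a b => b ∈ g a) (f := σ.symm)
        (fun a b hab => (hmem a b).mp hab) _ _ h
      have hz : σ.symm ⟨0, hN⟩ = ⟨0, hN⟩ := by
        rw [Equiv.symm_apply_eq, hσ]
      rwa [hz] at this
    · rintro ⟨w, hw, rfl⟩
      have : Relation.ReflTransGen (fun a b => b ∈ T g a) (σ ⟨0, hN⟩) (σ w) := Relation.ReflTransGen.lift (p := fun a b => b ∈ T g a) (f := σ)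
        (fun a b hab => (hmem (σ a) (σ b)).mpr (by simpa using hab)) _ _ hw
      rwa [hσ] at this
  unfold cS
  rw [← T.tsum_eq]
  apply tsum_congr
  intro g
  have himg : outComp N hN (T g) = ↑(S.image σ) ↔ outComp N hN g = ↑S := by
    rw [houtComp, Finset.coe_image]
    exact ⟨fun h => (Set.image_injective.mpr σ.injective) h,
      fun h => by rw [h]⟩
  have hW : gW N p (T g) = gW N p g := by unfold gW; rw [hweight]
  simp only [Set.indicator_apply, Set.mem_setOf_eq]
  rw [hW]
  exact if_congr himg rfl rfl

/-- Existence of a permutation fixing a point and mapping one finset to another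
of the same cardinality. -/
lemma exists_perm_fixing {α : Type*} [Fintype α] [DecidableEq α]
    (S S' : Finset α) (a : α) (haS : a ∈ S) (haS' : a ∈ S')
    (hcard : S.card = S'.card) :
    ∃ σ : Equiv.Perm α, σ a = a ∧ S.image σ = S' := by
  have h1 : Fintype.card {x // x ∈ S} = Fintype.card {x // x ∈ S'} := by
    simp [Fintype.card_coe, hcard]
  have h2 : Fintype.card {x // ¬ x ∈ S} = Fintype.card {x // ¬ x ∈ S'} := by
    rw [Fintype.card_subtype_compl, Fintype.card_subtype_compl, h1]
  obtain e0 := Fintype.equivOfCardEq h1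
  obtain f := Fintype.equivOfCardEq h2
  set e : {x // x ∈ S} ≃ {x // x ∈ S'} :=
    e0.trans (Equiv.swap (e0 ⟨a, haS⟩) ⟨a, haS'⟩) with he
  have hea : e ⟨a, haS⟩ = ⟨a, haS'⟩ := by
    simp [he, Equiv.swap_apply_left]
  set σ : Equiv.Perm α := Equiv.subtypeCongr e f with hσdef
  have happly : ∀ x (hx : x ∈ S), σ x = ↑(e ⟨x, hx⟩) := by
    intro x hx
    simp [hσdef, Equiv.subtypeCongr, Equiv.sumCompl_symm_apply_of_pos hx]
  refine ⟨σ, ?_, ?_⟩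
  · rw [happly a haS, hea]
  · apply Finset.eq_of_subset_of_card_le
    · intro y hy
      simp only [Finset.mem_image] at hy
      obtain ⟨x, hx, rfl⟩ := hy
      rw [happly x hx]
      exact (e ⟨x, hx⟩).2
    · rw [Finset.card_image_of_injective _ σ.injective, hcard]

/-- Counting subsets of a given finset with fixed cardinality containing a point. -/
lemma count_subsets {α : Type*} [Fintype α] [DecidableEq α]
    (t : Finset α) (a : α) (ha : a ∈ t) (k : ℕ) (hk : 1 ≤ k) :
    (Finset.univ.filter fun S : Finset α => S.card = k ∧ S ⊆ t ∧ a ∈ S).card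
      = (t.card - 1).choose (k - 1) := by
  rw [← Finset.card_erase_of_mem ha, ← Finset.card_powersetCard]
  apply Finset.card_bij (fun S _ => S.erase a)
  · intro S hS
    simp only [Finset.mem_filter, Finset.mem_univ, true_and] at hS
    obtain ⟨hc, hsub, haS⟩ := hS
    rw [Finset.mem_powersetCard]
    constructor
    · intro x hx
      simp only [Finset.mem_erase] at hx ⊢
      exact ⟨hx.1, hsub hx.2⟩
    · rw [Finset.card_erase_of_mem haS, hc]
  · intro S hS S' hS' h
    simp only [Finset.mem_filter, Finset.mem_univ, true_and] at hS hS'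
    have : insert a (S.erase a) = insert a (S'.erase a) := by rw [h]
    rwa [Finset.insert_erase hS.2.2, Finset.insert_erase hS'.2.2] at this
  · intro B hB
    rw [Finset.mem_powersetCard] at hB
    obtain ⟨hsub, hc⟩ := hB
    have haB : a ∉ B := fun h => (Finset.mem_erase.mp (hsub h)).1 rfl
    refine ⟨insert a B, ?_, ?_⟩
    · simp only [Finset.mem_filter, Finset.mem_univ, true_and]
      refine ⟨?_, ?_, Finset.mem_insert_self a B⟩
      · rw [Finset.card_insert_of_notMem haB, hc]
        omega
      · intro x hx
        rcases Finset.mem_insert.mp hx with rfl | hx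
        · exact ha
        · exact Finset.erase_subset _ _ (hsub hx)
    · rw [Finset.erase_insert haB]

lemma card_filter_lt (N m : ℕ) (h : m ≤ N) :
    (Finset.univ.filter fun v : Fin N => (v : ℕ) < m).card = m := by
  rw [← Fintype.card_fin m]
  rw [← Finset.card_univ]
  apply Finset.card_bij (fun (v : Fin N) hv => (⟨(v : ℕ),
    by simpa using (Finset.mem_filter.mp hv).2⟩ : Fin m))
  · intros; exact Finset.mem_univ _
  · intro v hv v' hv' hh
    exact Fin.ext (by simpa using hh)
  · intro w _
    refine ⟨⟨(w : ℕ), lt_of_lt_of_le w.2 h⟩, ?_, rfl⟩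
    simp [w.2]

theorem outcomponent_size_and_containment_probability
    (N : ℕ) (hN : 2 ≤ N) (p : ℕ → ℝ)
    (hp0 : ∀ ℓ, 0 ≤ p ℓ) (hp1 : ∀ ℓ, p ℓ ≤ 1) (hpsum : ∑' ℓ, p ℓ = 1)
    (μ : ℝ → ℝ) (hμ : ∀ x, μ x = ∑' ℓ, p ℓ * x ^ ℓ)
    (M k : ℕ) (hk1 : 1 ≤ k) (hkM : k ≤ M) (hMN : M ≤ N) :
    graphProb N p
      {g | (outComp N (by omega) g).ncard = k ∧
           (outComp N (by omega) g) ⊆ {v : Fin N | (v : ℕ) < M}} =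
      qProb N (by omega) p k *
        (((M - 1).choose (k - 1) : ℝ) / ((N - 1).choose (k - 1) : ℝ)) := by
  have hN0 : 0 < N := by omega
  set z0 : Fin N := ⟨0, hN0⟩ with hz0
  -- reference finset
  set S0 : Finset (Fin N) := Finset.univ.filter (fun v : Fin N => (v : ℕ) < k) with hS0
  have hS0card : S0.card = k := card_filter_lt N k (by omega)
  have hz0S0 : z0 ∈ S0 := by
    simp [hS0, hz0]
    omega
  set c0 : ENNReal := cS N hN0 p S0 with hc0
  -- all `cS S` with `z0 ∈ S` and `S.card = k` are equal to `c0`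
  have hconst : ∀ S : Finset (Fin N), z0 ∈ S → S.card = k → cS N hN0 p S = c0 := by
    intro S hz hc
    obtain ⟨σ, hσ0, hσS⟩ := exists_perm_fixing S0 S z0 hz0S0 hz (by rw [hS0card, hc])
    rw [hc0, ← hσS, cS_perm hN0 p σ hσ0 S0]
  -- the target finsets
  set tM : Finset (Fin N) := Finset.univ.filter (fun v : Fin N => (v : ℕ) < M) with htM
  have htMcard : tM.card = M := card_filter_lt N M hMN
  have hz0tM : z0 ∈ tM := by simp [htM, hz0]; omega
  -- a general computation of probabilities of these decomposable events
  have hmain : ∀ t : Finset (Fin N), z0 ∈ t →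
      graphProb N p {g | (outComp N hN0 g).ncard = k ∧ outComp N hN0 g ⊆ ↑t}
        = ((t.card - 1).choose (k - 1) : ENNReal).toReal * c0.toReal := by
    intro t hzt
    have hset : {g : Fin N → List (Fin N) |
        (outComp N hN0 g).ncard = k ∧ outComp N hN0 g ⊆ ↑t}
        = {g | ((outComp N hN0 g).toFinset.card = k ∧ (outComp N hN0 g).toFinset ⊆ t)} := by
      ext g
      simp only [Set.mem_setOf_eq, Set.ncard_eq_toFinset_card']
      constructor
      · rintro ⟨h1, h2⟩
        refine ⟨h1, fun x hx => ?_⟩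
        exact h2 (by simpa using hx)
      · rintro ⟨h1, h2⟩
        refine ⟨h1, fun x hx => ?_⟩
        exact h2 (by simpa using hx)
    rw [hset, graphProb_eq_toReal hN hp0,
      tsum_indicator_decomp hN0 p (fun S => S.card = k ∧ S ⊆ t)
        (Finset.univ.filter (fun S : Finset (Fin N) => S.card = k ∧ S ⊆ t))
        (fun S => by simp)]
    have hsub : Finset.univ.filter
        (fun S : Finset (Fin N) => S.card = k ∧ S ⊆ t ∧ z0 ∈ S)
        ⊆ Finset.univ.filter (fun S : Finset (Fin N) => S.card = k ∧ S ⊆ t) := by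
      intro S hS
      simp only [Finset.mem_filter, Finset.mem_univ, true_and] at hS ⊢
      exact ⟨hS.1, hS.2.1⟩
    have hzero : ∀ S ∈ Finset.univ.filter
        (fun S : Finset (Fin N) => S.card = k ∧ S ⊆ t),
        S ∉ Finset.univ.filter
          (fun S : Finset (Fin N) => S.card = k ∧ S ⊆ t ∧ z0 ∈ S) →
        cS N hN0 p S = 0 := by
      intro S hS hS'
      simp only [Finset.mem_filter, Finset.mem_univ, true_and] at hS hS'
      apply cS_eq_zero
      intro hz
      exact hS' ⟨hS.1, hS.2, hz⟩
    rw [← Finset.sum_subset hsub hzero]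
    rw [Finset.sum_congr rfl (fun S hS => by
      simp only [Finset.mem_filter, Finset.mem_univ, true_and] at hS
      exact hconst S hS.2.2 hS.1)]
    rw [Finset.sum_const, count_subsets t z0 hzt k hk1]
    rw [nsmul_eq_mul, ENNReal.toReal_mul]
  -- apply to both events
  have hq : qProb N hN0 p k
      = ((N - 1).choose (k - 1) : ENNReal).toReal * c0.toReal := by
    have := hmain Finset.univ (Finset.mem_univ z0)
    have huniv : {g : Fin N → List (Fin N) |
        (outComp N hN0 g).ncard = k ∧ outComp N hN0 g ⊆ ↑(Finset.univ : Finset (Fin N))}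
        = {g | (outComp N hN0 g).ncard = k} := by
      ext g; simp
    rw [huniv] at this
    unfold qProb
    rw [this, Finset.card_univ, Fintype.card_fin]
  have hm : graphProb N p
      {g | (outComp N hN0 g).ncard = k ∧ outComp N hN0 g ⊆ {v : Fin N | (v : ℕ) < M}}
      = ((M - 1).choose (k - 1) : ENNReal).toReal * c0.toReal := by
    have := hmain tM hz0tM
    have hset : ((tM : Finset (Fin N)) : Set (Fin N)) = {v : Fin N | (v : ℕ) < M} := by
      ext v; simp [htM]
    rw [hset] at this
    rw [this, htMcard]
  show graphProb N p
      {g | (outComp N hN0 g).ncard = k ∧ outComp N hN0 g ⊆ {v : Fin N | (v : ℕ) < M}}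
      = qProb N hN0 p k * (((M - 1).choose (k - 1) : ℝ) / ((N - 1).choose (k - 1) : ℝ))
  rw [hm, hq]
  have hC2 : ((N - 1).choose (k - 1) : ℝ) ≠ 0 := by
    have : 0 < (N - 1).choose (k - 1) := Nat.choose_pos (by omega)
    exact_mod_cast this.ne'
  rw [ENNReal.toReal_natCast, ENNReal.toReal_natCast]
  field_simp
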